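/- There exist real constants A, B, C such that the function β : ℝ → ℝ defined piecewise by β(x) = eˣ − 1 for x ≥ log 2, β(x) = Ax⁵ + Bx³ + Cx for −log 2 ≤ x < log 2, and β(x) = 1 − e⁻ˣ for x < −log 2, is twice continuously differentiable on ℝ and strictly increasing, hence a bijection from ℝ onto ℝ; moreover its inverse α satisfies α(y) = log(1 + y) for y ≥ 1 and α(y) = −log(1 − y) for y ≤ −1. -/

import Mathlib

open Real Filter Set

noncomputable def LL : ℝ := Real.log 2

lemma hLpos : 0 < LL := Real.log_pos one_lt_two
lemma hLlb : 0.6931 < LL := by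
  have := Real.log_two_gt_d9; unfold LL; linarith
lemma hLub : LL < 0.6932 := by
  have := Real.log_two_lt_d9; unfold LL; linarith

noncomputable def cA : ℝ := (3 - 6*LL + 2*LL^2)/(8*LL^5)
noncomputable def cB : ℝ := (-2*LL^2 + 10*LL - 5)/(4*LL^3)
noncomputable def cC : ℝ := (2*LL^2 - 14*LL + 15)/(8*LL)

lemma hcA_neg : cA < 0 := by
  rw [cA]
  apply div_neg_of_neg_of_pos
  · nlinarith [hLlb, hLub]
  · nlinarith [pow_pos hLpos 5]
lemma hcB_pos : 0 < cB := by
  rw [cB]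
  apply div_pos
  · nlinarith [hLlb, hLub]
  · nlinarith [pow_pos hLpos 3]
lemma hcC_pos : 0 < cC := by
  rw [cC]
  apply div_pos
  · nlinarith [hLlb, hLub]
  · nlinarith [hLpos]
lemma hkey : 0 < 5*cA*LL^4 + cC := by
  have h := hLpos.ne'
  have : 5*cA*LL^4 + cC = (6*LL^2 - 22*LL + 15)/(4*LL) := by
    rw [cA, cC]; field_simp; ring
  rw [this]
  apply div_pos
  · nlinarith [hLlb, hLub]
  · nlinarith [hLpos]

lemma deriv_mid_pos {x : ℝ} (hx : x^2 ≤ LL^2) : 0 < 5*cA*x^4 + 3*cB*x^2 + cC := by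
  have h4 : x^4 ≤ LL^4 := by nlinarith [sq_nonneg x]
  have h1 : 5*cA*LL^4 ≤ 5*cA*x^4 := by nlinarith [hcA_neg]
  have h2 : 0 ≤ 3*cB*x^2 := by nlinarith [hcB_pos, sq_nonneg x]
  nlinarith [hkey]

lemma glueDeriv {F f g : ℝ → ℝ} {a d : ℝ}
    (hf : HasDerivAt f d a) (hg : HasDerivAt g d a)
    (hle : F =ᶠ[nhdsWithin a (Set.Iic a)] f) (hge : F =ᶠ[nhdsWithin a (Set.Ici a)] g) :
    HasDerivAt F d a := by
  have h1 : HasDerivWithinAt F d (Set.Iic a) a :=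
    (hf.hasDerivWithinAt).congr_of_eventuallyEq hle
      (hle.eq_of_nhdsWithin (Set.mem_Iic.2 le_rfl))
  have h2 : HasDerivWithinAt F d (Set.Ici a) a :=
    (hg.hasDerivWithinAt).congr_of_eventuallyEq hge
      (hge.eq_of_nhdsWithin (Set.mem_Ici.2 le_rfl))
  have h3 := h1.union h2
  rw [Set.Iic_union_Ici] at h3
  exact h3.hasDerivAt (by simp)

lemma glueCont {F f g : ℝ → ℝ} {a : ℝ}
    (hf : ContinuousAt f a) (hg : ContinuousAt g a)
    (hle : F =ᶠ[nhdsWithin a (Set.Iic a)] f) (hge : F =ᶠ[nhdsWithin a (Set.Ici a)] g) :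
    ContinuousAt F a := by
  have h1 : ContinuousWithinAt F (Set.Iic a) a :=
    (hf.continuousWithinAt).congr_of_eventuallyEq hle
      (hle.eq_of_nhdsWithin (Set.mem_Iic.2 le_rfl))
  have h2 : ContinuousWithinAt F (Set.Ici a) a :=
    (hg.continuousWithinAt).congr_of_eventuallyEq hge
      (hge.eq_of_nhdsWithin (Set.mem_Ici.2 le_rfl))
  have h3 := h1.union h2
  rw [Set.Iic_union_Ici] at h3
  rwa [continuousWithinAt_univ] at h3

lemma hLexp : Real.exp LL = 2 := Real.exp_log two_pos

lemma e1 : cA*LL^5 + cB*LL^3 + cC*LL = 1 := by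
  have h := hLpos.ne'
  rw [cA, cB, cC]; field_simp; ring
lemma e2 : 5*cA*LL^4 + 3*cB*LL^2 + cC = 2 := by
  have h := hLpos.ne'
  rw [cA, cB, cC]; field_simp; ring
lemma e3 : 20*cA*LL^3 + 6*cB*LL = 2 := by
  have h := hLpos.ne'
  rw [cA, cB]; field_simp; ring

noncomputable def betaF : ℝ → ℝ := fun x =>
  if LL ≤ x then Real.exp x - 1 else if -LL ≤ x then cA*x^5 + cB*x^3 + cC*x
  else 1 - Real.exp (-x)
noncomputable def betaF' : ℝ → ℝ := fun x =>
  if LL ≤ x then Real.exp x else if -LL ≤ x then 5*cA*x^4 + 3*cB*x^2 + cC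
  else Real.exp (-x)
noncomputable def betaF'' : ℝ → ℝ := fun x =>
  if LL ≤ x then Real.exp x else if -LL ≤ x then 20*cA*x^3 + 6*cB*x
  else -Real.exp (-x)

lemma hq (x : ℝ) : HasDerivAt (fun y => cA*y^5 + cB*y^3 + cC*y)
    (5*cA*x^4 + 3*cB*x^2 + cC) x := by
  have h := (((hasDerivAt_pow 5 x).const_mul cA).add
    ((hasDerivAt_pow 3 x).const_mul cB)).add ((hasDerivAt_id x).const_mul cC)
  exact h.congr_deriv (by push_cast; ring)

lemma hq' (x : ℝ) : HasDerivAt (fun y => 5*cA*y^4 + 3*cB*y^2 + cC)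
    (20*cA*x^3 + 6*cB*x) x := by
  have h := ((((hasDerivAt_pow 4 x).const_mul (5*cA)).add
    ((hasDerivAt_pow 2 x).const_mul (3*cB))).add (hasDerivAt_const x cC))
  exact h.congr_deriv (by push_cast; ring)

lemma hf0 (x : ℝ) : HasDerivAt (fun y => Real.exp y - 1) (Real.exp x) x :=
  (Real.hasDerivAt_exp x).sub_const 1

lemma hf2 (x : ℝ) : HasDerivAt (fun y => 1 - Real.exp (-y)) (Real.exp (-x)) x := by
  have h := ((hasDerivAt_neg x).exp).const_sub 1
  exact h.congr_deriv (by ring)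

-- boundary values
lemma qL : cA*LL^5 + cB*LL^3 + cC*LL = Real.exp LL - 1 := by rw [e1, hLexp]; norm_num
lemma qnegL : cA*(-LL)^5 + cB*(-LL)^3 + cC*(-LL) = 1 - Real.exp (-(-LL)) := by
  rw [neg_neg, hLexp]; nlinarith [e1]
lemma q'L : 5*cA*LL^4 + 3*cB*LL^2 + cC = Real.exp LL := by rw [e2, hLexp]
lemma q'negL : 5*cA*(-LL)^4 + 3*cB*(-LL)^2 + cC = Real.exp (-(-LL)) := by
  rw [neg_neg, hLexp]; nlinarith [e2]
lemma q''L : 20*cA*LL^3 + 6*cB*LL = Real.exp LL := by rw [e3, hLexp]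
lemma q''negL : 20*cA*(-LL)^3 + 6*cB*(-LL) = -Real.exp (-(-LL)) := by
  rw [neg_neg, hLexp]; nlinarith [e3]

noncomputable def piece (u v w : ℝ → ℝ) : ℝ → ℝ := fun x =>
  if LL ≤ x then u x else if -LL ≤ x then v x else w x

lemma betaF_eq_piece : betaF = piece (fun y => Real.exp y - 1)
    (fun y => cA*y^5 + cB*y^3 + cC*y) (fun y => 1 - Real.exp (-y)) := rfl
lemma betaF'_eq_piece : betaF' = piece Real.exp
    (fun y => 5*cA*y^4 + 3*cB*y^2 + cC) (fun y => Real.exp (-y)) := rfl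
lemma betaF''_eq_piece : betaF'' = piece Real.exp
    (fun y => 20*cA*y^3 + 6*cB*y) (fun y => -Real.exp (-y)) := rfl

variable {u v w : ℝ → ℝ}

lemma piece_right {x : ℝ} (h : LL < x) : piece u v w =ᶠ[nhds x] u := by
  filter_upwards [isOpen_Ioi.mem_nhds (show x ∈ Ioi LL from h)] with y hy
  simp [piece, le_of_lt (mem_Ioi.1 hy)]

lemma piece_mid {x : ℝ} (h1 : -LL < x) (h2 : x < LL) : piece u v w =ᶠ[nhds x] v := by
  filter_upwards [isOpen_Ioo.mem_nhds (show x ∈ Ioo (-LL) LL from ⟨h1, h2⟩)] with y hy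
  simp [piece, not_le.2 hy.2, hy.1.le]

lemma piece_left {x : ℝ} (h : x < -LL) : piece u v w =ᶠ[nhds x] w := by
  filter_upwards [isOpen_Iio.mem_nhds (show x ∈ Iio (-LL) from h)] with y hy
  have hy' : y < -LL := hy
  have h2 : ¬ (LL ≤ y) := by have := hLpos; linarith
  simp [piece, h2, not_le.2 hy']

lemma piece_geL : piece u v w =ᶠ[nhdsWithin LL (Set.Ici LL)] u := by
  filter_upwards [self_mem_nhdsWithin] with y hy
  simp [piece, mem_Ici.1 hy]

lemma piece_leL (hv : v LL = u LL) : piece u v w =ᶠ[nhdsWithin LL (Set.Iic LL)] v := by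
  have hmem : Ioi (-LL) ∈ nhds LL := isOpen_Ioi.mem_nhds (by have := hLpos; simp; linarith)
  filter_upwards [mem_nhdsWithin_of_mem_nhds hmem, self_mem_nhdsWithin] with y h1 h2
  rcases eq_or_lt_of_le (mem_Iic.1 h2) with h|h
  · subst h; simp [piece, hv]
  · simp [piece, not_le.2 h, le_of_lt (mem_Ioi.1 h1)]

lemma piece_genegL : piece u v w =ᶠ[nhdsWithin (-LL) (Set.Ici (-LL))] v := by
  have hmem : Iio LL ∈ nhds (-LL) := isOpen_Iio.mem_nhds (by have := hLpos; simp; linarith)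
  filter_upwards [mem_nhdsWithin_of_mem_nhds hmem, self_mem_nhdsWithin] with y h1 h2
  simp [piece, not_le.2 (mem_Iio.1 h1), mem_Ici.1 h2]

lemma piece_lenegL (hw : w (-LL) = v (-LL)) :
    piece u v w =ᶠ[nhdsWithin (-LL) (Set.Iic (-LL))] w := by
  filter_upwards [self_mem_nhdsWithin] with y h2
  rcases eq_or_lt_of_le (mem_Iic.1 h2) with h|h
  · subst h
    have hnot : ¬ (LL ≤ -LL) := by have := hLpos; linarith
    simp [piece, hnot, hw]
  · have hnot : ¬ (LL ≤ y) := by have := hLpos; linarith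
    simp [piece, hnot, not_le.2 h]

lemma betaF_hasDeriv (x : ℝ) : HasDerivAt betaF (betaF' x) x := by
  rw [betaF_eq_piece]
  rcases lt_trichotomy x (-LL) with h|h|h
  · have hx : betaF' x = Real.exp (-x) := by
      have h2 : ¬ (LL ≤ x) := by have := hLpos; linarith
      simp [betaF', h2, not_le.2 h]
    rw [hx]
    exact (hf2 x).congr_of_eventuallyEq (piece_left h)
  · subst h
    have hx : betaF' (-LL) = 5*cA*(-LL)^4 + 3*cB*(-LL)^2 + cC := by
      have h2 : ¬ (LL ≤ -LL) := by have := hLpos; linarith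
      simp [betaF', h2]
    rw [hx]
    exact glueDeriv (by rw [q'negL]; exact hf2 (-LL)) (hq (-LL))
      (piece_lenegL qnegL.symm) piece_genegL
  · rcases lt_trichotomy x LL with h'|h'|h'
    · have hx : betaF' x = 5*cA*x^4 + 3*cB*x^2 + cC := by
        simp [betaF', not_le.2 h', h.le]
      rw [hx]
      exact (hq x).congr_of_eventuallyEq (piece_mid h h')
    · subst h'
      have hx : betaF' LL = Real.exp LL := by simp [betaF']
      rw [hx]
      exact glueDeriv (by rw [← q'L]; exact hq LL) (hf0 LL)
        (piece_leL qL) piece_geL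
    · have hx : betaF' x = Real.exp x := by simp [betaF', h'.le]
      rw [hx]
      exact (hf0 x).congr_of_eventuallyEq (piece_right h')

lemma betaF'_hasDeriv (x : ℝ) : HasDerivAt betaF' (betaF'' x) x := by
  rw [betaF'_eq_piece]
  rcases lt_trichotomy x (-LL) with h|h|h
  · have hx : betaF'' x = -Real.exp (-x) := by
      have h2 : ¬ (LL ≤ x) := by have := hLpos; linarith
      simp [betaF'', h2, not_le.2 h]
    rw [hx]
    have hd : HasDerivAt (fun y => Real.exp (-y)) (-Real.exp (-x)) x := by
      have h := (hasDerivAt_neg x).exp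
      convert h using 1; ring
    exact hd.congr_of_eventuallyEq (piece_left h)
  · subst h
    have hx : betaF'' (-LL) = 20*cA*(-LL)^3 + 6*cB*(-LL) := by
      have h2 : ¬ (LL ≤ -LL) := by have := hLpos; linarith
      simp [betaF'', h2]
    rw [hx]
    have hd : HasDerivAt (fun y => Real.exp (-y)) (20*cA*(-LL)^3 + 6*cB*(-LL)) (-LL) := by
      rw [q''negL]
      have h := (hasDerivAt_neg (-LL)).exp
      convert h using 1; ring
    exact glueDeriv hd (hq' (-LL)) (piece_lenegL q'negL.symm) piece_genegL
  · rcases lt_trichotomy x LL with h'|h'|h'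
    · have hx : betaF'' x = 20*cA*x^3 + 6*cB*x := by
        simp [betaF'', not_le.2 h', h.le]
      rw [hx]
      exact (hq' x).congr_of_eventuallyEq (piece_mid h h')
    · subst h'
      have hx : betaF'' LL = Real.exp LL := by simp [betaF'']
      rw [hx]
      exact glueDeriv (by rw [← q''L]; exact hq' LL) (Real.hasDerivAt_exp LL)
        (piece_leL q'L) piece_geL
    · have hx : betaF'' x = Real.exp x := by simp [betaF'', h'.le]
      rw [hx]
      exact (Real.hasDerivAt_exp x).congr_of_eventuallyEq (piece_right h')

lemma betaF''_cont : Continuous betaF'' := by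
  rw [continuous_iff_continuousAt]
  intro x
  rw [betaF''_eq_piece]
  rcases lt_trichotomy x (-LL) with h|h|h
  · exact ((Real.continuous_exp.comp continuous_neg).neg.continuousAt).congr
      (piece_left h).symm
  · subst h
    exact glueCont (Real.continuous_exp.comp continuous_neg).neg.continuousAt
      (by fun_prop) (piece_lenegL q''negL.symm) piece_genegL
  · rcases lt_trichotomy x LL with h'|h'|h'
    · exact (by fun_prop : ContinuousAt (fun y : ℝ => 20*cA*y^3 + 6*cB*y) x).congr
        (piece_mid h h').symm
    · subst h'
      exact glueCont (by fun_prop) Real.continuous_exp.continuousAt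
        (piece_leL q''L) piece_geL
    · exact Real.continuous_exp.continuousAt.congr (piece_right h').symm

lemma betaF_deriv : deriv betaF = betaF' := funext fun x => (betaF_hasDeriv x).deriv
lemma betaF'_deriv : deriv betaF' = betaF'' := funext fun x => (betaF'_hasDeriv x).deriv

lemma betaF_contDiff : ContDiff ℝ 2 betaF := by
  rw [show (2 : WithTop ℕ∞) = 1 + 1 from rfl, contDiff_succ_iff_deriv]
  refine ⟨fun x => (betaF_hasDeriv x).differentiableAt, by simp, ?_⟩
  rw [betaF_deriv, contDiff_one_iff_deriv]
  exact ⟨fun x => (betaF'_hasDeriv x).differentiableAt,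
    by rw [betaF'_deriv]; exact betaF''_cont⟩

lemma betaF'_pos (x : ℝ) : 0 < betaF' x := by
  unfold betaF'
  split_ifs with h1 h2
  · exact Real.exp_pos x
  · exact deriv_mid_pos (by nlinarith [not_le.1 h1])
  · exact Real.exp_pos (-x)

lemma betaF_mono : StrictMono betaF :=
  strictMono_of_deriv_pos (fun x => by rw [betaF_deriv]; exact betaF'_pos x)

lemma betaF_surj : Function.Surjective betaF := by
  apply Continuous.surjective betaF_contDiff.continuous
  · apply Tendsto.congr' (f₁ := fun x => Real.exp x + (-1))
    · filter_upwards [eventually_ge_atTop LL] with x hx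
      simp [betaF, hx]; ring
    · exact tendsto_atTop_add_const_right atTop (-1) Real.tendsto_exp_atTop
  · apply Tendsto.congr' (f₁ := fun x => 1 + (-Real.exp (-x)))
    · filter_upwards [eventually_lt_atBot (-LL)] with x hx
      have h2 : ¬ (LL ≤ x) := by have := hLpos; linarith
      simp [betaF, h2, not_le.2 hx]; ring
    · exact tendsto_atBot_add_const_left atBot 1
        (tendsto_neg_atTop_atBot.comp (Real.tendsto_exp_atTop.comp tendsto_neg_atBot_atTop))

lemma betaF_bij : Function.Bijective betaF := ⟨betaF_mono.injective, betaF_surj⟩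

theorem smooth_paste_beta :
    ∃ A B C : ℝ, ∃ β α : ℝ → ℝ,
      (∀ x : ℝ, β x =
        if Real.log 2 ≤ x then Real.exp x - 1
        else if -Real.log 2 ≤ x then A * x ^ 5 + B * x ^ 3 + C * x
        else 1 - Real.exp (-x)) ∧
      ContDiff ℝ 2 β ∧
      StrictMono β ∧
      Function.Bijective β ∧
      Function.LeftInverse α β ∧
      Function.RightInverse α β ∧
      (∀ y : ℝ, 1 ≤ y → α y = Real.log (1 + y)) ∧
      (∀ y : ℝ, y ≤ -1 → α y = -Real.log (1 - y)) := by
  refine ⟨cA, cB, cC, betaF, Function.invFun betaF, fun x => rfl, betaF_contDiff,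
    betaF_mono, betaF_bij, Function.leftInverse_invFun betaF_bij.1,
    Function.rightInverse_invFun betaF_bij.2, ?_, ?_⟩
  · intro y hy
    have hpos : (0:ℝ) < 1 + y := by linarith
    have hlog : LL ≤ Real.log (1 + y) := by
      unfold LL; exact Real.log_le_log two_pos (by linarith)
    have hval : betaF (Real.log (1 + y)) = y := by
      simp only [betaF, if_pos hlog, Real.exp_log hpos]; ring
    conv_lhs => rw [← hval]
    exact Function.leftInverse_invFun betaF_bij.1 _
  · intro y hy
    have hpos : (0:ℝ) < 1 - y := by linarith
    have hlog : LL ≤ Real.log (1 - y) := by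
      unfold LL; exact Real.log_le_log two_pos (by linarith)
    have hval : betaF (-Real.log (1 - y)) = y := by
      rcases eq_or_lt_of_le hlog with h|h
      · have hy1 : y = -1 := by
          have := Real.exp_log hpos
          rw [← h, hLexp] at this; linarith
        have hnot : ¬ (LL ≤ -Real.log (1 - y)) := by
          rw [← h]; have := hLpos; linarith
        have hx : -Real.log (1 - y) = -LL := by rw [← h]
        rw [hx, hy1]
        have hnot' : ¬ (LL ≤ -LL) := by have := hLpos; linarith
        show (if LL ≤ -LL then Real.exp (-LL) - 1
          else if -LL ≤ -LL then cA*(-LL)^5 + cB*(-LL)^3 + cC*(-LL)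
          else 1 - Real.exp (-(-LL))) = -1
        rw [if_neg hnot', if_pos le_rfl]
        have h2 := qnegL
        rw [neg_neg, hLexp] at h2
        linarith
      · have h1 : -Real.log (1 - y) < -LL := by linarith
        have hnot : ¬ (LL ≤ -Real.log (1 - y)) := by have := hLpos; linarith
        rw [betaF]
        simp only [if_neg hnot, if_neg (not_le.2 h1), neg_neg, Real.exp_log hpos]
        ring
    conv_lhs => rw [← hval]
    exact Function.leftInverse_invFun betaF_bij.1 _
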